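/- Generalization of Theorem 1 to subsets: with the Curious Explorer iterates, poorly visited sets K_n, and intrinsic rewards r_n, fix N ≥ 0, nonnegative reals ε₀, …, ε_N satisfying, for every 0 ≤ n ≤ N, sup_{π∈Π} V_{π,r_n}(μ_n) ≤ V_{π_{n+1},r_n}(μ_n) + ε_n, and subsets Q_n ⊆ K_n for each 0 ≤ n ≤ N. With β̃(s) = β_{ñ(s)} for ñ(s) = max{ n ≤ N : s ∈ K_n } if s lies in some K_n with n ≤ N and β̃(s) = 0 otherwise, it holds that (1/2) Σ_{n=0}^N sup_{π∈Π} Σ_{s∈Q_n} d_{δ_{s₀}}^π(s) ≤ Σ_{n=0}^N ε_n + Σ_{s∈S} β̃(s) + Σ_{s∈S} sup_{π∈Π} d_{δ_{s₀}}^π(s). -/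

import Mathlib

open Finset

variable {S A : Type*} [Fintype S] [Fintype A] [Nonempty S] [Nonempty A] [DecidableEq S]

/-- `ρ` is a probability distribution on the finite type `S`. -/
def IsDist {S : Type*} [Fintype S] (ρ : S → ℝ) : Prop :=
  (∀ s, 0 ≤ ρ s) ∧ ∑ s, ρ s = 1

/-- `π` is a stationary policy: a probability distribution over actions at each state. -/
def IsPolicy (π : S → A → ℝ) : Prop := ∀ s, IsDist (π s)

/-- `P` is a transition kernel: `P s a` is a distribution on next states. -/
def IsKernel (P : S → A → S → ℝ) : Prop := ∀ s a, IsDist (P s a)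

/-- The induced state-transition kernel `K_π(s'|s) = Σ_a π(a|s) P(s'|s,a)`. -/
def kpol (P : S → A → S → ℝ) (π : S → A → ℝ) (s s' : S) : ℝ :=
  ∑ a, π s a * P s a s'

/-- One step of the Markov chain with kernel `K_π`: `ρ ↦ ρ K_π`. -/
def step (P : S → A → S → ℝ) (π : S → A → ℝ) (ρ : S → ℝ) : S → ℝ :=
  fun s' => ∑ s, ρ s * kpol P π s s'

/-- `ρ K_π^t`: the state distribution after `t` steps started from `ρ`. -/
def iterDist (P : S → A → S → ℝ) (π : S → A → ℝ) (ρ : S → ℝ) (t : ℕ) : S → ℝ :=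
  (step P π)^[t] ρ

/-- The discounted state visitation distribution
`d_ρ^π(s) = (1-γ) Σ_t γ^t (ρ K_π^t)(s)`. -/
noncomputable def dvisit (P : S → A → S → ℝ) (γ : ℝ) (π : S → A → ℝ)
    (ρ : S → ℝ) (s : S) : ℝ :=
  (1 - γ) * ∑' t : ℕ, γ ^ t * iterDist P π ρ t s

/-- The normalized value function
`V_{π,r}(ρ) = (1-γ) Σ_t γ^t Σ_{s,a} (ρ K_π^t)(s) π(a|s) r(s,a)`. -/
noncomputable def value (P : S → A → S → ℝ) (γ : ℝ) (π : S → A → ℝ)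
    (r : S → A → ℝ) (ρ : S → ℝ) : ℝ :=
  (1 - γ) * ∑' t : ℕ, γ ^ t * ∑ s, ∑ a, iterDist P π ρ t s * π s a * r s a

/-- The Dirac distribution at `s₀`. -/
def dirac (s₀ : S) : S → ℝ := fun s => if s = s₀ then 1 else 0

/-- Curious Explorer reset models: `ceMu P γ πseq s₀ 0 = μ₋₁ = δ_{s₀}` and,
for `n ≥ 0`, `ceMu P γ πseq s₀ (n+1) = μ_n = ½ D_n + ½ δ_{s₀}` where
`D_n = d_{μ_{n-1}}^{π_n}`. -/
noncomputable def ceMu (P : S → A → S → ℝ) (γ : ℝ) (πseq : ℕ → S → A → ℝ)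
    (s₀ : S) : ℕ → S → ℝ
  | 0 => dirac s₀
  | n + 1 => fun s =>
      (1 / 2) * dvisit P γ (πseq n) (ceMu P γ πseq s₀ n) s + (1 / 2) * dirac s₀ s

/-- `D_n = d_{μ_{n-1}}^{π_n}`. -/
noncomputable def ceD (P : S → A → S → ℝ) (γ : ℝ) (πseq : ℕ → S → A → ℝ)
    (s₀ : S) (n : ℕ) : S → ℝ :=
  dvisit P γ (πseq n) (ceMu P γ πseq s₀ n)

open scoped Classical in
/-- The set of poorly visited states `K_n = { s : Σ_{i=0}^n D_i(s) ≤ β_n }`. -/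
noncomputable def ceK (P : S → A → S → ℝ) (γ : ℝ) (πseq : ℕ → S → A → ℝ)
    (s₀ : S) (β : ℕ → ℝ) (n : ℕ) : Finset S :=
  Finset.univ.filter fun s => ∑ i ∈ Finset.range (n + 1), ceD P γ πseq s₀ i s ≤ β n

/-- The intrinsic reward `r_n(s,a) = 1_{s ∈ K_n}`. -/
noncomputable def ceR (P : S → A → S → ℝ) (γ : ℝ) (πseq : ℕ → S → A → ℝ)
    (s₀ : S) (β : ℕ → ℝ) (n : ℕ) (s : S) (_a : A) : ℝ :=
  if s ∈ ceK P γ πseq s₀ β n then 1 else 0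

open scoped Classical in
/-- `β̃(s) = β_{ñ(s)}` where `ñ(s) = max { n ≤ N : s ∈ K_n }` if `s` lies in some
`K_n` with `n ≤ N`, and `β̃(s) = 0` otherwise. -/
noncomputable def ceBetaTilde (P : S → A → S → ℝ) (γ : ℝ) (πseq : ℕ → S → A → ℝ)
    (s₀ : S) (β : ℕ → ℝ) (N : ℕ) (s : S) : ℝ :=
  if ∃ n ≤ N, s ∈ ceK P γ πseq s₀ β n then
    β (Nat.findGreatest (fun n => s ∈ ceK P γ πseq s₀ β n) N)
  else 0


/-! ### Auxiliary lemmas -/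
set_option linter.unusedSectionVars false

section CeAux

variable {P : S → A → S → ℝ} {γ : ℝ}

lemma isDist_dirac (s₀ : S) : IsDist (dirac s₀) := by
  constructor
  · intro s; unfold dirac; split <;> norm_num
  · simp [dirac]

lemma kpol_nonneg (hP : IsKernel P) {π : S → A → ℝ} (hπ : IsPolicy π) (s s' : S) :
    0 ≤ kpol P π s s' :=
  Finset.sum_nonneg fun a _ => mul_nonneg ((hπ s).1 a) ((hP s a).1 s')

lemma kpol_sum_one (hP : IsKernel P) {π : S → A → ℝ} (hπ : IsPolicy π) (s : S) :
    ∑ s', kpol P π s s' = 1 := by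
  unfold kpol
  rw [Finset.sum_comm]
  have h : ∀ a, ∑ s', π s a * P s a s' = π s a := by
    intro a; rw [← Finset.mul_sum, (hP s a).2, mul_one]
  simp_rw [h]
  exact (hπ s).2

lemma isDist_step (hP : IsKernel P) {π : S → A → ℝ} (hπ : IsPolicy π) {ρ : S → ℝ}
    (hρ : IsDist ρ) : IsDist (step P π ρ) := by
  constructor
  · intro s'
    exact Finset.sum_nonneg fun s _ => mul_nonneg (hρ.1 s) (kpol_nonneg hP hπ s s')
  · unfold step
    rw [Finset.sum_comm]
    have h : ∀ s, ∑ s', ρ s * kpol P π s s' = ρ s := by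
      intro s; rw [← Finset.mul_sum, kpol_sum_one hP hπ, mul_one]
    simp_rw [h]
    exact hρ.2

lemma iterDist_zero (π : S → A → ℝ) (ρ : S → ℝ) : iterDist P π ρ 0 = ρ := rfl

lemma iterDist_succ (π : S → A → ℝ) (ρ : S → ℝ) (t : ℕ) :
    iterDist P π ρ (t + 1) = step P π (iterDist P π ρ t) := by
  unfold iterDist; rw [Function.iterate_succ_apply']

lemma isDist_iterDist (hP : IsKernel P) {π : S → A → ℝ} (hπ : IsPolicy π) {ρ : S → ℝ}
    (hρ : IsDist ρ) (t : ℕ) : IsDist (iterDist P π ρ t) := by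
  induction t with
  | zero => exact hρ
  | succ t ih => rw [iterDist_succ]; exact isDist_step hP hπ ih

lemma dist_comp_le_one {ρ : S → ℝ} (hρ : IsDist ρ) (s : S) : ρ s ≤ 1 := by
  calc ρ s ≤ ∑ s', ρ s' := Finset.single_le_sum (fun i _ => hρ.1 i) (Finset.mem_univ s)
  _ = 1 := hρ.2

lemma summable_geom_mul (hγ0 : 0 ≤ γ) (hγ1 : γ < 1) {x : ℕ → ℝ}
    (hx0 : ∀ t, 0 ≤ x t) (hx1 : ∀ t, x t ≤ 1) :
    Summable (fun t => γ ^ t * x t) := by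
  refine Summable.of_nonneg_of_le (fun t => mul_nonneg (pow_nonneg hγ0 t) (hx0 t))
    (fun t => ?_) (summable_geometric_of_lt_one hγ0 hγ1)
  calc γ ^ t * x t ≤ γ ^ t * 1 := mul_le_mul_of_nonneg_left (hx1 t) (pow_nonneg hγ0 t)
  _ = γ ^ t := mul_one _

lemma summable_iter (hP : IsKernel P) (hγ0 : 0 ≤ γ) (hγ1 : γ < 1)
    {π : S → A → ℝ} (hπ : IsPolicy π) {ρ : S → ℝ} (hρ : IsDist ρ) (s : S) :
    Summable (fun t => γ ^ t * iterDist P π ρ t s) :=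
  summable_geom_mul hγ0 hγ1 (fun t => (isDist_iterDist hP hπ hρ t).1 s)
    (fun t => dist_comp_le_one (isDist_iterDist hP hπ hρ t) s)

lemma dvisit_nonneg (hP : IsKernel P) (hγ0 : 0 ≤ γ) (hγ1 : γ < 1)
    {π : S → A → ℝ} (hπ : IsPolicy π) {ρ : S → ℝ} (hρ : IsDist ρ) (s : S) :
    0 ≤ dvisit P γ π ρ s := by
  unfold dvisit
  refine mul_nonneg (by linarith) (tsum_nonneg fun t => ?_)
  exact mul_nonneg (pow_nonneg hγ0 t) ((isDist_iterDist hP hπ hρ t).1 s)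

lemma dvisit_le_one (hP : IsKernel P) (hγ0 : 0 ≤ γ) (hγ1 : γ < 1)
    {π : S → A → ℝ} (hπ : IsPolicy π) {ρ : S → ℝ} (hρ : IsDist ρ) (s : S) :
    dvisit P γ π ρ s ≤ 1 := by
  unfold dvisit
  have h1 : ∑' t : ℕ, γ ^ t * iterDist P π ρ t s ≤ ∑' t : ℕ, γ ^ t := by
    refine Summable.tsum_le_tsum (fun t => ?_) (summable_iter hP hγ0 hγ1 hπ hρ s)
      (summable_geometric_of_lt_one hγ0 hγ1)
    calc γ ^ t * iterDist P π ρ t s ≤ γ ^ t * 1 :=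
          mul_le_mul_of_nonneg_left (dist_comp_le_one (isDist_iterDist hP hπ hρ t) s)
            (pow_nonneg hγ0 t)
    _ = γ ^ t := mul_one _
  have h2 : ∑' t : ℕ, γ ^ t = (1 - γ)⁻¹ := tsum_geometric_of_lt_one hγ0 hγ1
  have h3 : (0:ℝ) < 1 - γ := by linarith
  calc (1 - γ) * ∑' t : ℕ, γ ^ t * iterDist P π ρ t s ≤ (1 - γ) * (1 - γ)⁻¹ := by
        rw [← h2]; exact mul_le_mul_of_nonneg_left h1 (le_of_lt h3)
  _ = 1 := mul_inv_cancel₀ (ne_of_gt h3)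

lemma sum_dvisit_eq_one (hP : IsKernel P) (hγ0 : 0 ≤ γ) (hγ1 : γ < 1)
    {π : S → A → ℝ} (hπ : IsPolicy π) {ρ : S → ℝ} (hρ : IsDist ρ) :
    ∑ s, dvisit P γ π ρ s = 1 := by
  unfold dvisit
  have h3 : (0:ℝ) < 1 - γ := by linarith
  rw [← Finset.mul_sum]
  rw [← Summable.tsum_finsetSum (fun s _ => summable_iter hP hγ0 hγ1 hπ hρ s)]
  have h : ∀ t : ℕ, (∑ s, γ ^ t * iterDist P π ρ t s) = γ ^ t := by
    intro t
    rw [← Finset.mul_sum, (isDist_iterDist hP hπ hρ t).2, mul_one]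
  rw [tsum_congr h, tsum_geometric_of_lt_one hγ0 hγ1, mul_inv_cancel₀ (ne_of_gt h3)]

lemma isDist_dvisit (hP : IsKernel P) (hγ0 : 0 ≤ γ) (hγ1 : γ < 1)
    {π : S → A → ℝ} (hπ : IsPolicy π) {ρ : S → ℝ} (hρ : IsDist ρ) :
    IsDist (dvisit P γ π ρ) :=
  ⟨dvisit_nonneg hP hγ0 hγ1 hπ hρ, sum_dvisit_eq_one hP hγ0 hγ1 hπ hρ⟩

end CeAux

section CeAux2
set_option linter.unusedSectionVars false

variable {P : S → A → S → ℝ} {γ : ℝ}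

lemma step_comb (π : S → A → ℝ) (ρ₁ ρ₂ : S → ℝ) (a b : ℝ) :
    step P π (fun s => a * ρ₁ s + b * ρ₂ s)
      = fun s' => a * step P π ρ₁ s' + b * step P π ρ₂ s' := by
  funext s'
  unfold step
  rw [Finset.mul_sum, Finset.mul_sum, ← Finset.sum_add_distrib]
  refine Finset.sum_congr rfl fun s _ => by ring

lemma iterDist_comb (π : S → A → ℝ) (ρ₁ ρ₂ : S → ℝ) (a b : ℝ) (t : ℕ) (s : S) :
    iterDist P π (fun s => a * ρ₁ s + b * ρ₂ s) t s
      = a * iterDist P π ρ₁ t s + b * iterDist P π ρ₂ t s := by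
  induction t generalizing s with
  | zero => rfl
  | succ t ih =>
      rw [iterDist_succ, iterDist_succ, iterDist_succ]
      have h : iterDist P π (fun s => a * ρ₁ s + b * ρ₂ s) t
          = fun s => a * iterDist P π ρ₁ t s + b * iterDist P π ρ₂ t s := funext ih
      rw [h, step_comb]

lemma dvisit_comb (hP : IsKernel P) (hγ0 : 0 ≤ γ) (hγ1 : γ < 1)
    {π : S → A → ℝ} (hπ : IsPolicy π) {ρ₁ ρ₂ : S → ℝ} (hρ₁ : IsDist ρ₁) (hρ₂ : IsDist ρ₂)
    (a b : ℝ) (s : S) :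
    dvisit P γ π (fun s => a * ρ₁ s + b * ρ₂ s) s
      = a * dvisit P γ π ρ₁ s + b * dvisit P γ π ρ₂ s := by
  unfold dvisit
  have h : (fun t => γ ^ t * iterDist P π (fun s => a * ρ₁ s + b * ρ₂ s) t s)
      = fun t => a * (γ ^ t * iterDist P π ρ₁ t s) + b * (γ ^ t * iterDist P π ρ₂ t s) := by
    funext t; rw [iterDist_comb]; ring
  rw [h, Summable.tsum_add ((summable_iter hP hγ0 hγ1 hπ hρ₁ s).mul_left a)
        ((summable_iter hP hγ0 hγ1 hπ hρ₂ s).mul_left b),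
      tsum_mul_left, tsum_mul_left]
  ring

lemma value_eq_sum (hP : IsKernel P) (hγ0 : 0 ≤ γ) (hγ1 : γ < 1)
    {π : S → A → ℝ} (hπ : IsPolicy π) {ρ : S → ℝ} (hρ : IsDist ρ) (rb : S → ℝ) :
    value P γ π (fun s _ => rb s) ρ = ∑ s, rb s * dvisit P γ π ρ s := by
  unfold value
  have hin : ∀ t, (∑ s, ∑ a, iterDist P π ρ t s * π s a * rb s)
      = ∑ s, iterDist P π ρ t s * rb s := by
    intro t
    refine Finset.sum_congr rfl fun s _ => ?_
    have h : ∀ a : A, iterDist P π ρ t s * π s a * rb s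
        = π s a * (iterDist P π ρ t s * rb s) := fun a => by ring
    simp_rw [h]
    rw [← Finset.sum_mul, (hπ s).2, one_mul]
  simp_rw [hin]
  have h2 : ∀ t : ℕ, γ ^ t * ∑ s, iterDist P π ρ t s * rb s
      = ∑ s, γ ^ t * iterDist P π ρ t s * rb s := by
    intro t; rw [Finset.mul_sum]; exact Finset.sum_congr rfl fun s _ => by ring
  simp_rw [h2]
  rw [Summable.tsum_finsetSum (fun s _ => (summable_iter hP hγ0 hγ1 hπ hρ s).mul_right (rb s)),
      Finset.mul_sum]
  refine Finset.sum_congr rfl fun s _ => ?_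
  rw [tsum_mul_right]
  unfold dvisit; ring

lemma value_le_one (hP : IsKernel P) (hγ0 : 0 ≤ γ) (hγ1 : γ < 1)
    {π : S → A → ℝ} (hπ : IsPolicy π) {ρ : S → ℝ} (hρ : IsDist ρ) {rb : S → ℝ}
    (hr0 : ∀ s, 0 ≤ rb s) (hr1 : ∀ s, rb s ≤ 1) :
    value P γ π (fun s _ => rb s) ρ ≤ 1 := by
  rw [value_eq_sum hP hγ0 hγ1 hπ hρ]
  calc ∑ s, rb s * dvisit P γ π ρ s ≤ ∑ s, dvisit P γ π ρ s := by
        refine Finset.sum_le_sum fun s _ => ?_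
        calc rb s * dvisit P γ π ρ s ≤ 1 * dvisit P γ π ρ s :=
              mul_le_mul_of_nonneg_right (hr1 s) (dvisit_nonneg hP hγ0 hγ1 hπ hρ s)
        _ = dvisit P γ π ρ s := one_mul _
  _ = 1 := sum_dvisit_eq_one hP hγ0 hγ1 hπ hρ

end CeAux2

section CeAux3
set_option linter.unusedSectionVars false
set_option linter.unusedVariables false

variable {P : S → A → S → ℝ} {γ : ℝ}

/-- Bellman optimality operator for a state reward `rb`. -/
noncomputable def bellOp (P : S → A → S → ℝ) (γ : ℝ) (rb : S → ℝ) (v : S → ℝ) : S → ℝ :=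
  fun s => (1 - γ) * rb s + γ * Finset.univ.sup' Finset.univ_nonempty
    (fun a => ∑ s', P s a s' * v s')

lemma bellOp_dist_le (hP : IsKernel P) (hγ0 : 0 ≤ γ) (rb : S → ℝ) (v u : S → ℝ) :
    dist (bellOp P γ rb v) (bellOp P γ rb u) ≤ γ * dist v u := by
  rw [dist_pi_le_iff (mul_nonneg hγ0 dist_nonneg)]
  intro s
  rw [Real.dist_eq]
  have key : ∀ w w' : S → ℝ,
      Finset.univ.sup' Finset.univ_nonempty (fun a => ∑ s', P s a s' * w s')
        ≤ Finset.univ.sup' Finset.univ_nonempty (fun a => ∑ s', P s a s' * w' s')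
          + dist w w' := by
    intro w w'
    refine Finset.sup'_le _ _ fun a _ => ?_
    have h1 : ∑ s', P s a s' * w s' ≤ (∑ s', P s a s' * w' s') + dist w w' := by
      have h2 : ∑ s', P s a s' * w s' - ∑ s', P s a s' * w' s'
          = ∑ s', P s a s' * (w s' - w' s') := by
        rw [← Finset.sum_sub_distrib]
        exact Finset.sum_congr rfl fun s' _ => by ring
      have h3 : ∑ s', P s a s' * (w s' - w' s') ≤ dist w w' := by
        calc ∑ s', P s a s' * (w s' - w' s') ≤ ∑ s', P s a s' * dist w w' := by
              refine Finset.sum_le_sum fun s' _ => ?_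
              refine mul_le_mul_of_nonneg_left ?_ ((hP s a).1 s')
              calc w s' - w' s' ≤ |w s' - w' s'| := le_abs_self _
              _ = dist (w s') (w' s') := (Real.dist_eq _ _).symm
              _ ≤ dist w w' := dist_le_pi_dist w w' s'
        _ = dist w w' := by rw [← Finset.sum_mul, (hP s a).2, one_mul]
      linarith
    calc ∑ s', P s a s' * w s'
        ≤ (∑ s', P s a s' * w' s') + dist w w' := h1
    _ ≤ _ + dist w w' :=
        add_le_add_left
          (Finset.le_sup' (fun a => ∑ s', P s a s' * w' s') (Finset.mem_univ a)) _
  have h4 := key v u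
  have h5 := key u v
  rw [dist_comm u v] at h5
  unfold bellOp
  have habs : |((1 - γ) * rb s + γ * Finset.univ.sup' Finset.univ_nonempty
        (fun a => ∑ s', P s a s' * v s'))
      - ((1 - γ) * rb s + γ * Finset.univ.sup' Finset.univ_nonempty
        (fun a => ∑ s', P s a s' * u s'))|
      = γ * |Finset.univ.sup' Finset.univ_nonempty (fun a => ∑ s', P s a s' * v s')
          - Finset.univ.sup' Finset.univ_nonempty (fun a => ∑ s', P s a s' * u s')| := by
    have hd : ((1 - γ) * rb s + γ * Finset.univ.sup' Finset.univ_nonempty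
          (fun a => ∑ s', P s a s' * v s'))
        - ((1 - γ) * rb s + γ * Finset.univ.sup' Finset.univ_nonempty
          (fun a => ∑ s', P s a s' * u s'))
        = γ * (Finset.univ.sup' Finset.univ_nonempty (fun a => ∑ s', P s a s' * v s')
            - Finset.univ.sup' Finset.univ_nonempty (fun a => ∑ s', P s a s' * u s')) := by
      ring
    rw [hd, abs_mul, abs_of_nonneg hγ0]
  rw [habs]
  refine mul_le_mul_of_nonneg_left ?_ hγ0
  rw [abs_sub_le_iff]
  constructor <;> [linarith; linarith]

lemma exists_bellOp_fixed (hP : IsKernel P) (hγ0 : 0 ≤ γ) (hγ1 : γ < 1) (rb : S → ℝ) :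
    ∃ w : S → ℝ, bellOp P γ rb w = w := by
  have hK1 : (⟨γ, hγ0⟩ : NNReal) < 1 := by exact_mod_cast hγ1
  have hlip : LipschitzWith ⟨γ, hγ0⟩ (bellOp P γ rb) :=
    LipschitzWith.of_dist_le_mul fun v u => bellOp_dist_le hP hγ0 rb v u
  have hc : ContractingWith ⟨γ, hγ0⟩ (bellOp P γ rb) := ⟨hK1, hlip⟩
  exact ⟨ContractingWith.fixedPoint (bellOp P γ rb) hc, hc.fixedPoint_isFixedPt⟩

lemma bellFixed_nonneg (hP : IsKernel P) (hγ0 : 0 ≤ γ) (hγ1 : γ < 1)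
    {rb : S → ℝ} (hr0 : ∀ s, 0 ≤ rb s) {w : S → ℝ} (hw : bellOp P γ rb w = w) :
    ∀ s, 0 ≤ w s := by
  obtain ⟨m, _, hm⟩ := Finset.exists_min_image (Finset.univ : Finset S) w
    ⟨Classical.arbitrary S, Finset.mem_univ _⟩
  suffices h0 : 0 ≤ w m from fun s => le_trans h0 (hm s (Finset.mem_univ s))
  have hfix := congrFun hw m
  unfold bellOp at hfix
  have a₀ : A := Classical.arbitrary A
  have hsup : w m ≤ ∑ s', P m a₀ s' * w s' := by
    calc w m = (∑ s', P m a₀ s') * w m := by rw [(hP m a₀).2, one_mul]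
    _ = ∑ s', P m a₀ s' * w m := by rw [Finset.sum_mul]
    _ ≤ ∑ s', P m a₀ s' * w s' := by
        refine Finset.sum_le_sum fun s' _ => ?_
        exact mul_le_mul_of_nonneg_left (hm s' (Finset.mem_univ s')) ((hP m a₀).1 s')
  have hsup2 : w m ≤ Finset.univ.sup' Finset.univ_nonempty
      (fun a => ∑ s', P m a s' * w s') :=
    le_trans hsup (Finset.le_sup' (fun a => ∑ s', P m a s' * w s') (Finset.mem_univ a₀))
  have h1 : (1 - γ) * rb m + γ * w m ≤ w m := by
    have h5 := mul_le_mul_of_nonneg_left hsup2 hγ0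
    linarith
  have h2 : (0:ℝ) ≤ (1 - γ) * rb m := mul_nonneg (by linarith) (hr0 m)
  nlinarith

lemma bellFixed_onestep (hP : IsKernel P) (hγ0 : 0 ≤ γ)
    {π : S → A → ℝ} (hπ : IsPolicy π) {rb : S → ℝ} {w : S → ℝ}
    (hw : bellOp P γ rb w = w) (s : S) :
    (1 - γ) * rb s + γ * ∑ s', kpol P π s s' * w s' ≤ w s := by
  have h1 : ∑ s', kpol P π s s' * w s' = ∑ a, π s a * ∑ s', P s a s' * w s' := by
    unfold kpol
    simp_rw [Finset.sum_mul]
    rw [Finset.sum_comm]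
    refine Finset.sum_congr rfl fun a _ => ?_
    rw [Finset.mul_sum]
    exact Finset.sum_congr rfl fun s' _ => by ring
  have h2 : ∑ a, π s a * ∑ s', P s a s' * w s'
      ≤ Finset.univ.sup' Finset.univ_nonempty (fun a => ∑ s', P s a s' * w s') := by
    calc ∑ a, π s a * ∑ s', P s a s' * w s'
        ≤ ∑ a, π s a * Finset.univ.sup' Finset.univ_nonempty
            (fun a => ∑ s', P s a s' * w s') := by
          refine Finset.sum_le_sum fun a _ => ?_
          exact mul_le_mul_of_nonneg_left
            (Finset.le_sup' (fun a' => ∑ s', P s a' s' * w s') (Finset.mem_univ a))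
            ((hπ s).1 a)
    _ = Finset.univ.sup' Finset.univ_nonempty (fun a => ∑ s', P s a s' * w s') := by
          rw [← Finset.sum_mul, (hπ s).2, one_mul]
  have hfix := congrFun hw s
  unfold bellOp at hfix
  rw [h1]
  have := mul_le_mul_of_nonneg_left h2 hγ0
  linarith

lemma step_dual (π : S → A → ℝ) (ν w : S → ℝ) :
    ∑ s, ν s * ∑ s', kpol P π s s' * w s' = ∑ s', step P π ν s' * w s' := by
  unfold step
  simp_rw [Finset.sum_mul]
  rw [Finset.sum_comm]
  refine Finset.sum_congr rfl fun s _ => ?_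
  rw [Finset.mul_sum]
  exact Finset.sum_congr rfl fun s' _ => by ring

end CeAux3

section CeAux4
set_option linter.unusedSectionVars false
set_option linter.unusedVariables false

variable {P : S → A → S → ℝ} {γ : ℝ}

lemma value_partial (hP : IsKernel P) (hγ0 : 0 ≤ γ) (hγ1 : γ < 1)
    {π : S → A → ℝ} (hπ : IsPolicy π) {ρ : S → ℝ} (hρ : IsDist ρ) (rb : S → ℝ) :
    value P γ π (fun s _ => rb s) ρ
      = ∑' t : ℕ, (1 - γ) * (γ ^ t * ∑ s, iterDist P π ρ t s * rb s) := by
  unfold value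
  have hin : ∀ t, (∑ s, ∑ a, iterDist P π ρ t s * π s a * rb s)
      = ∑ s, iterDist P π ρ t s * rb s := by
    intro t
    refine Finset.sum_congr rfl fun s _ => ?_
    have h : ∀ a : A, iterDist P π ρ t s * π s a * rb s
        = π s a * (iterDist P π ρ t s * rb s) := fun a => by ring
    simp_rw [h]
    rw [← Finset.sum_mul, (hπ s).2, one_mul]
  simp_rw [hin]
  rw [← tsum_mul_left]

/-- Partial-sum supersolution bound. -/
lemma value_le_fixed (hP : IsKernel P) (hγ0 : 0 ≤ γ) (hγ1 : γ < 1)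
    {π : S → A → ℝ} (hπ : IsPolicy π) {ρ : S → ℝ} (hρ : IsDist ρ) {rb : S → ℝ}
    (hr0 : ∀ s, 0 ≤ rb s) (hr1 : ∀ s, rb s ≤ 1) {w : S → ℝ}
    (hw : bellOp P γ rb w = w) :
    value P γ π (fun s _ => rb s) ρ ≤ ∑ s, ρ s * w s := by
  have hwnn := bellFixed_nonneg hP hγ0 hγ1 hr0 hw
  have hkey : ∀ T : ℕ,
      (∑ t ∈ Finset.range T, (1 - γ) * (γ ^ t * ∑ s, iterDist P π ρ t s * rb s))
        + γ ^ T * ∑ s, iterDist P π ρ T s * w s ≤ ∑ s, ρ s * w s := by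
    intro T
    induction T with
    | zero => simp [iterDist]
    | succ T ih =>
        refine le_trans ?_ ih
        rw [Finset.sum_range_succ]
        have hstep : (1 - γ) * (∑ s, iterDist P π ρ T s * rb s)
            + γ * ∑ s, iterDist P π ρ (T + 1) s * w s
            ≤ ∑ s, iterDist P π ρ T s * w s := by
          have hone : ∀ s, iterDist P π ρ T s * ((1 - γ) * rb s
                + γ * ∑ s', kpol P π s s' * w s')
              ≤ iterDist P π ρ T s * w s := fun s =>
            mul_le_mul_of_nonneg_left (bellFixed_onestep hP hγ0 hπ hw s)
              ((isDist_iterDist hP hπ hρ T).1 s)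
          have hsum := Finset.sum_le_sum (fun s (_ : s ∈ Finset.univ) => hone s)
          have hexp : ∑ s, iterDist P π ρ T s * ((1 - γ) * rb s
                + γ * ∑ s', kpol P π s s' * w s')
              = (1 - γ) * (∑ s, iterDist P π ρ T s * rb s)
                + γ * ∑ s, iterDist P π ρ T s * ∑ s', kpol P π s s' * w s' := by
            rw [Finset.mul_sum, Finset.mul_sum, ← Finset.sum_add_distrib]
            exact Finset.sum_congr rfl fun s _ => by ring
          have hdual : ∑ s, iterDist P π ρ T s * ∑ s', kpol P π s s' * w s'
              = ∑ s', iterDist P π ρ (T + 1) s' * w s' := by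
            rw [step_dual]
            rw [iterDist_succ]
          rw [hexp, hdual] at hsum
          exact hsum
        have hmul := mul_le_mul_of_nonneg_left hstep (pow_nonneg hγ0 T)
        have he : γ ^ T * ((1 - γ) * (∑ s, iterDist P π ρ T s * rb s)
              + γ * ∑ s, iterDist P π ρ (T + 1) s * w s)
            = (1 - γ) * (γ ^ T * ∑ s, iterDist P π ρ T s * rb s)
              + γ ^ (T + 1) * ∑ s, iterDist P π ρ (T + 1) s * w s := by
          rw [pow_succ]; ring
        rw [he] at hmul
        linarith [hmul]
  have hsummable : Summable (fun t => (1 - γ)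
      * (γ ^ t * ∑ s, iterDist P π ρ t s * rb s)) := by
    refine Summable.mul_left _ (summable_geom_mul hγ0 hγ1 (fun t => ?_) (fun t => ?_))
    · exact Finset.sum_nonneg fun s _ =>
        mul_nonneg ((isDist_iterDist hP hπ hρ t).1 s) (hr0 s)
    · calc ∑ s, iterDist P π ρ t s * rb s ≤ ∑ s, iterDist P π ρ t s := by
            refine Finset.sum_le_sum fun s _ => ?_
            calc iterDist P π ρ t s * rb s ≤ iterDist P π ρ t s * 1 :=
                  mul_le_mul_of_nonneg_left (hr1 s) ((isDist_iterDist hP hπ hρ t).1 s)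
            _ = iterDist P π ρ t s := mul_one _
      _ = 1 := (isDist_iterDist hP hπ hρ t).2
  rw [value_partial hP hγ0 hγ1 hπ hρ rb]
  refine Summable.tsum_le_of_sum_range_le hsummable fun T => ?_
  have htail : 0 ≤ γ ^ T * ∑ s, iterDist P π ρ T s * w s := by
    refine mul_nonneg (pow_nonneg hγ0 T) (Finset.sum_nonneg fun s _ => ?_)
    exact mul_nonneg ((isDist_iterDist hP hπ hρ T).1 s) (hwnn s)
  linarith [hkey T]

lemma exists_greedy (hP : IsKernel P) (hγ0 : 0 ≤ γ) (hγ1 : γ < 1)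
    (rb : S → ℝ) {w : S → ℝ} (hw : bellOp P γ rb w = w) :
    ∃ π : S → A → ℝ, IsPolicy π ∧
      ∀ s, w s = (1 - γ) * rb s + γ * ∑ s', kpol P π s s' * w s' := by
  have hch : ∀ s : S, ∃ a : A,
      Finset.univ.sup' Finset.univ_nonempty (fun a => ∑ s', P s a s' * w s')
        = ∑ s', P s a s' * w s' := by
    intro s
    obtain ⟨a, _, ha⟩ := Finset.exists_mem_eq_sup' Finset.univ_nonempty
      (fun a => ∑ s', P s a s' * w s')
    exact ⟨a, ha⟩
  choose astar hastar using hch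
  classical
  refine ⟨fun s a => if a = astar s then 1 else 0, fun s => ⟨fun a => ?_, by simp⟩,
    fun s => ?_⟩
  · dsimp only; split <;> norm_num
  · have hk : ∀ s', kpol P (fun s a => if a = astar s then 1 else 0) s s' = P s (astar s) s' := by
      intro s'
      unfold kpol
      simp [ite_mul]
    simp_rw [hk]
    rw [← hastar s]
    have := congrFun hw s
    unfold bellOp at this
    exact this.symm

lemma value_eq_fixed_of_greedy (hP : IsKernel P) (hγ0 : 0 ≤ γ) (hγ1 : γ < 1)
    {π : S → A → ℝ} (hπ : IsPolicy π) {ρ : S → ℝ} (hρ : IsDist ρ) {rb : S → ℝ}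
    (hr0 : ∀ s, 0 ≤ rb s) (hr1 : ∀ s, rb s ≤ 1) {w : S → ℝ}
    (hgr : ∀ s, w s = (1 - γ) * rb s + γ * ∑ s', kpol P π s s' * w s') :
    value P γ π (fun s _ => rb s) ρ = ∑ s, ρ s * w s := by
  have hkey : ∀ T : ℕ,
      (∑ t ∈ Finset.range T, (1 - γ) * (γ ^ t * ∑ s, iterDist P π ρ t s * rb s))
        + γ ^ T * ∑ s, iterDist P π ρ T s * w s = ∑ s, ρ s * w s := by
    intro T
    induction T with
    | zero => simp [iterDist]
    | succ T ih =>
        rw [← ih, Finset.sum_range_succ]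
        have hone : ∀ s, iterDist P π ρ T s * w s
            = iterDist P π ρ T s * ((1 - γ) * rb s + γ * ∑ s', kpol P π s s' * w s') :=
          fun s => by rw [← hgr s]
        have hexp : ∑ s, iterDist P π ρ T s * w s
            = (1 - γ) * (∑ s, iterDist P π ρ T s * rb s)
              + γ * ∑ s, iterDist P π ρ T s * ∑ s', kpol P π s s' * w s' := by
          rw [Finset.sum_congr rfl fun s _ => hone s]
          rw [Finset.mul_sum, Finset.mul_sum, ← Finset.sum_add_distrib]
          exact Finset.sum_congr rfl fun s _ => by ring
        have hdual : ∑ s, iterDist P π ρ T s * ∑ s', kpol P π s s' * w s'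
            = ∑ s', iterDist P π ρ (T + 1) s' * w s' := by
          rw [step_dual, iterDist_succ]
        rw [hexp, hdual]
        rw [pow_succ]
        ring
  have hf0 : ∀ t : ℕ, 0 ≤ (1 - γ) * (γ ^ t * ∑ s, iterDist P π ρ t s * rb s) := by
    intro t
    refine mul_nonneg (by linarith) (mul_nonneg (pow_nonneg hγ0 t) ?_)
    exact Finset.sum_nonneg fun s _ =>
      mul_nonneg ((isDist_iterDist hP hπ hρ t).1 s) (hr0 s)
  set C := ∑ s, |w s| with hC
  have hXbound : ∀ T : ℕ, |∑ s, iterDist P π ρ T s * w s| ≤ C := by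
    intro T
    calc |∑ s, iterDist P π ρ T s * w s| ≤ ∑ s, |iterDist P π ρ T s * w s| :=
          Finset.abs_sum_le_sum_abs _ _
    _ ≤ ∑ s, |w s| := by
        refine Finset.sum_le_sum fun s _ => ?_
        rw [abs_mul]
        calc |iterDist P π ρ T s| * |w s| ≤ 1 * |w s| := by
              refine mul_le_mul_of_nonneg_right ?_ (abs_nonneg _)
              rw [abs_of_nonneg ((isDist_iterDist hP hπ hρ T).1 s)]
              exact dist_comp_le_one (isDist_iterDist hP hπ hρ T) s
        _ = |w s| := one_mul _
  have htends : Filter.Tendsto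
      (fun T => ∑ t ∈ Finset.range T, (1 - γ) * (γ ^ t * ∑ s, iterDist P π ρ t s * rb s))
      Filter.atTop (nhds (∑ s, ρ s * w s)) := by
    have heq : (fun T => ∑ t ∈ Finset.range T,
        (1 - γ) * (γ ^ t * ∑ s, iterDist P π ρ t s * rb s))
        = fun T => (∑ s, ρ s * w s) - γ ^ T * ∑ s, iterDist P π ρ T s * w s := by
      funext T
      linarith [hkey T]
    rw [heq]
    have hz : Filter.Tendsto (fun T : ℕ => γ ^ T * ∑ s, iterDist P π ρ T s * w s)
        Filter.atTop (nhds 0) := by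
      have hb : ∀ T : ℕ, ‖γ ^ T * ∑ s, iterDist P π ρ T s * w s‖ ≤ γ ^ T * C := by
        intro T
        rw [Real.norm_eq_abs, abs_mul, abs_of_nonneg (pow_nonneg hγ0 T)]
        exact mul_le_mul_of_nonneg_left (hXbound T) (pow_nonneg hγ0 T)
      refine squeeze_zero_norm hb ?_
      have := (tendsto_pow_atTop_nhds_zero_of_lt_one hγ0 hγ1).mul_const C
      simpa using this
    have := Filter.Tendsto.sub (tendsto_const_nhds
      (x := ∑ s, ρ s * w s) (f := Filter.atTop)) hz
    simpa using this
  have hsummable : Summable (fun t => (1 - γ)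
      * (γ ^ t * ∑ s, iterDist P π ρ t s * rb s)) := by
    refine Summable.mul_left _ (summable_geom_mul hγ0 hγ1 (fun t => ?_) (fun t => ?_))
    · exact Finset.sum_nonneg fun s _ =>
        mul_nonneg ((isDist_iterDist hP hπ hρ t).1 s) (hr0 s)
    · calc ∑ s, iterDist P π ρ t s * rb s ≤ ∑ s, iterDist P π ρ t s := by
            refine Finset.sum_le_sum fun s _ => ?_
            calc iterDist P π ρ t s * rb s ≤ iterDist P π ρ t s * 1 :=
                  mul_le_mul_of_nonneg_left (hr1 s) ((isDist_iterDist hP hπ hρ t).1 s)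
            _ = iterDist P π ρ t s := mul_one _
      _ = 1 := (isDist_iterDist hP hπ hρ t).2
  have h2 := hsummable.hasSum.tendsto_sum_nat
  have hlim := tendsto_nhds_unique h2 htends
  rw [value_partial hP hγ0 hγ1 hπ hρ rb]
  exact hlim

end CeAux4

section CeAux5
set_option linter.unusedSectionVars false
set_option linter.unusedVariables false

variable {P : S → A → S → ℝ} {γ : ℝ}

lemma sum_dirac_mul (s₀ : S) (f : S → ℝ) : ∑ s, dirac s₀ s * f s = f s₀ := by
  simp [dirac, ite_mul]

lemma indicator_mul_sum (K : Finset S) (f : S → ℝ) :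
    ∑ s, (if s ∈ K then (1:ℝ) else 0) * f s = ∑ s ∈ K, f s := by
  rw [Finset.sum_congr rfl (fun s _ => ite_mul (s ∈ K) (1:ℝ) 0 (f s))]
  simp_rw [one_mul, zero_mul]
  rw [Finset.sum_ite_mem, Finset.univ_inter]

lemma sum_swap_finsets {M : ℕ} (T : ℕ → Finset S) (f : ℕ → S → ℝ) :
    ∑ n ∈ Finset.range M, ∑ s ∈ T n, f n s
      = ∑ s, ∑ n ∈ (Finset.range M).filter (fun n => s ∈ T n), f n s := by
  have h1 : ∀ n, (∑ s, if s ∈ T n then f n s else 0) = ∑ s ∈ T n, f n s := by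
    intro n
    rw [Finset.sum_ite_mem, Finset.univ_inter]
  simp_rw [← h1]
  rw [Finset.sum_comm]
  exact Finset.sum_congr rfl fun s _ => (Finset.sum_filter _ _).symm

end CeAux5

set_option maxHeartbeats 1000000 in
/-- generalization of Theorem 1 to subsets `Q_n ⊆ K_n`:
`½ Σ_{n=0}^N sup_{π∈Π} Σ_{s∈Q_n} d_{δ_{s₀}}^π(s)
  ≤ Σ_{n=0}^N ε_n + Σ_s β̃(s) + Σ_s sup_{π∈Π} d_{δ_{s₀}}^π(s)`. -/
theorem stmt13_ce_provable_subsets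
    (P : S → A → S → ℝ) (γ : ℝ) (hP : IsKernel P) (hγ0 : 0 ≤ γ) (hγ1 : γ < 1)
    (s₀ : S) (πseq : ℕ → S → A → ℝ) (hπseq : ∀ k, IsPolicy (πseq k))
    (β : ℕ → ℝ) (hβ : ∀ n, 0 ≤ β n) (N : ℕ)
    (ε : ℕ → ℝ) (hε : ∀ n ≤ N, 0 ≤ ε n)
    (hopt : ∀ n ≤ N,
      (⨆ π : {π' : S → A → ℝ // IsPolicy π'},
        value P γ π.1 (ceR P γ πseq s₀ β n) (ceMu P γ πseq s₀ (n + 1))) ≤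
      value P γ (πseq (n + 1)) (ceR P γ πseq s₀ β n) (ceMu P γ πseq s₀ (n + 1))
        + ε n)
    (Q : ℕ → Finset S) (hQ : ∀ n ≤ N, Q n ⊆ ceK P γ πseq s₀ β n) :
    (1 / 2) * ∑ n ∈ Finset.range (N + 1),
        (⨆ π : {π' : S → A → ℝ // IsPolicy π'}, ∑ s ∈ Q n, dvisit P γ π.1 (dirac s₀) s) ≤
      (∑ n ∈ Finset.range (N + 1), ε n) +
      (∑ s : S, ceBetaTilde P γ πseq s₀ β N s) +
      (∑ s : S, ⨆ π : {π' : S → A → ℝ // IsPolicy π'}, dvisit P γ π.1 (dirac s₀) s) := by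
  classical
  have hnePol : Nonempty {π' : S → A → ℝ // IsPolicy π'} := ⟨⟨πseq 0, hπseq 0⟩⟩
  -- distribution facts
  have hμ : ∀ n, IsDist (ceMu P γ πseq s₀ n) := by
    intro n
    induction n with
    | zero => exact isDist_dirac s₀
    | succ n ih =>
        have hdv : IsDist (dvisit P γ (πseq n) (ceMu P γ πseq s₀ n)) :=
          isDist_dvisit hP hγ0 hγ1 (hπseq n) ih
        constructor
        · intro s
          have h1 := hdv.1 s
          have h2 := (isDist_dirac s₀).1 s
          show 0 ≤ 1 / 2 * dvisit P γ (πseq n) (ceMu P γ πseq s₀ n) s + 1 / 2 * dirac s₀ s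
          linarith
        · show (∑ s, (1 / 2 * dvisit P γ (πseq n) (ceMu P γ πseq s₀ n) s
            + 1 / 2 * dirac s₀ s)) = 1
          rw [Finset.sum_add_distrib, ← Finset.mul_sum, ← Finset.mul_sum, hdv.2,
            (isDist_dirac s₀).2]
          norm_num
  have hD : ∀ n, IsDist (ceD P γ πseq s₀ n) :=
    fun n => isDist_dvisit hP hγ0 hγ1 (hπseq n) (hμ n)
  -- indicator rewards
  have hceR : ∀ n, ceR P γ πseq s₀ β n
      = fun s (_ : A) => (if s ∈ ceK P γ πseq s₀ β n then (1:ℝ) else 0) := fun n => rfl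
  have hr0 : ∀ n s, (0:ℝ) ≤ (if s ∈ ceK P γ πseq s₀ β n then (1:ℝ) else 0) := by
    intro n s; split <;> norm_num
  have hr1 : ∀ n s, (if s ∈ ceK P γ πseq s₀ β n then (1:ℝ) else 0) ≤ 1 := by
    intro n s; split <;> norm_num
  -- Bellman fixed points
  choose w hw using fun n => exists_bellOp_fixed hP hγ0 hγ1
    (fun s => if s ∈ ceK P γ πseq s₀ β n then (1:ℝ) else 0)
  -- facts about g
  have hbddg : ∀ s : S, BddAbove (Set.range fun π : {π' : S → A → ℝ // IsPolicy π'} =>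
      dvisit P γ π.1 (dirac s₀) s) := by
    intro s
    refine ⟨1, ?_⟩
    rintro x ⟨π, rfl⟩
    exact dvisit_le_one hP hγ0 hγ1 π.2 (isDist_dirac s₀) s
  have hgle : ∀ (π : S → A → ℝ), IsPolicy π → ∀ s : S,
      dvisit P γ π (dirac s₀) s
        ≤ ⨆ π' : {π' : S → A → ℝ // IsPolicy π'}, dvisit P γ π'.1 (dirac s₀) s :=
    fun π hπ s => le_ciSup (hbddg s) ⟨π, hπ⟩
  have hg0 : ∀ s, 0 ≤ ⨆ π' : {π' : S → A → ℝ // IsPolicy π'},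
      dvisit P γ π'.1 (dirac s₀) s :=
    fun s => le_trans (dvisit_nonneg hP hγ0 hγ1 (hπseq 0) (isDist_dirac s₀) s)
      (hgle _ (hπseq 0) s)
  -- value identity for ceR rewards
  have hval : ∀ n (π : S → A → ℝ), IsPolicy π → ∀ (ρ : S → ℝ), IsDist ρ →
      value P γ π (ceR P γ πseq s₀ β n) ρ
        = ∑ s ∈ ceK P γ πseq s₀ β n, dvisit P γ π ρ s := by
    intro n π hπ ρ hρ
    rw [hceR n, value_eq_sum hP hγ0 hγ1 hπ hρ, indicator_mul_sum]
  -- STEP A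
  have stepA : ∀ n ∈ Finset.range (N + 1),
      (1/2) * (⨆ π : {π' : S → A → ℝ // IsPolicy π'},
          ∑ s ∈ Q n, dvisit P γ π.1 (dirac s₀) s)
        + (1/2) * (∑ s, ceD P γ πseq s₀ n s * w n s)
      ≤ ε n + ∑ s ∈ ceK P γ πseq s₀ β n, ceD P γ πseq s₀ (n+1) s := by
    intro n hn
    have hnN : n ≤ N := Nat.lt_succ_iff.mp (Finset.mem_range.mp hn)
    have hsup_le : (⨆ π : {π' : S → A → ℝ // IsPolicy π'},
        ∑ s ∈ Q n, dvisit P γ π.1 (dirac s₀) s) ≤ ∑ s, dirac s₀ s * w n s := by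
      refine ciSup_le fun π => ?_
      calc ∑ s ∈ Q n, dvisit P γ π.1 (dirac s₀) s
          ≤ ∑ s ∈ ceK P γ πseq s₀ β n, dvisit P γ π.1 (dirac s₀) s :=
            Finset.sum_le_sum_of_subset_of_nonneg (hQ n hnN)
              (fun s _ _ => dvisit_nonneg hP hγ0 hγ1 π.2 (isDist_dirac s₀) s)
        _ = value P γ π.1 (ceR P γ πseq s₀ β n) (dirac s₀) :=
            (hval n π.1 π.2 (dirac s₀) (isDist_dirac s₀)).symm
        _ ≤ ∑ s, dirac s₀ s * w n s := by
            rw [hceR n]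
            exact value_le_fixed hP hγ0 hγ1 π.2 (isDist_dirac s₀) (hr0 n) (hr1 n) (hw n)
    obtain ⟨πg, hπg, hgr⟩ := exists_greedy hP hγ0 hγ1 _ (hw n)
    have hVg : value P γ πg (ceR P γ πseq s₀ β n) (ceMu P γ πseq s₀ (n+1))
        = ∑ s, ceMu P γ πseq s₀ (n+1) s * w n s := by
      rw [hceR n]
      exact value_eq_fixed_of_greedy hP hγ0 hγ1 hπg (hμ (n+1)) (hr0 n) (hr1 n) hgr
    have hmuw : ∑ s, ceMu P γ πseq s₀ (n+1) s * w n s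
        = (1/2) * (∑ s, ceD P γ πseq s₀ n s * w n s)
          + (1/2) * (∑ s, dirac s₀ s * w n s) := by
      have hh : ceMu P γ πseq s₀ (n+1)
          = fun s => 1/2 * ceD P γ πseq s₀ n s + 1/2 * dirac s₀ s := rfl
      rw [hh, Finset.mul_sum, Finset.mul_sum, ← Finset.sum_add_distrib]
      exact Finset.sum_congr rfl fun s _ => by ring
    have hVg_le : value P γ πg (ceR P γ πseq s₀ β n) (ceMu P γ πseq s₀ (n+1))
        ≤ ⨆ π : {π' : S → A → ℝ // IsPolicy π'},
            value P γ π.1 (ceR P γ πseq s₀ β n) (ceMu P γ πseq s₀ (n + 1)) := by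
      have hbdd : BddAbove (Set.range fun π : {π' : S → A → ℝ // IsPolicy π'} =>
          value P γ π.1 (ceR P γ πseq s₀ β n) (ceMu P γ πseq s₀ (n + 1))) := by
        refine ⟨1, ?_⟩
        rintro x ⟨π, rfl⟩
        rw [hceR n]
        exact value_le_one hP hγ0 hγ1 π.2 (hμ (n+1)) (hr0 n) (hr1 n)
      exact le_ciSup hbdd (⟨πg, hπg⟩ : {π' : S → A → ℝ // IsPolicy π'})
    have hopt' := hopt n hnN
    have hVnext : value P γ (πseq (n+1)) (ceR P γ πseq s₀ β n) (ceMu P γ πseq s₀ (n+1))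
        = ∑ s ∈ ceK P γ πseq s₀ β n, ceD P γ πseq s₀ (n+1) s :=
      hval n (πseq (n+1)) (hπseq (n+1)) _ (hμ (n+1))
    linarith
  -- STEP B
  have hDsplit : ∀ n s, ceD P γ πseq s₀ (n+1) s
      = 1/2 * dvisit P γ (πseq (n+1)) (ceD P γ πseq s₀ n) s
        + 1/2 * dvisit P γ (πseq (n+1)) (dirac s₀) s := by
    intro n s
    show dvisit P γ (πseq (n+1)) (ceMu P γ πseq s₀ (n+1)) s = _
    have hh : ceMu P γ πseq s₀ (n+1)
        = fun s => 1/2 * ceD P γ πseq s₀ n s + 1/2 * dirac s₀ s := rfl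
    rw [hh]
    exact dvisit_comb hP hγ0 hγ1 (hπseq (n+1)) (hD n) (isDist_dirac s₀) _ _ s
  have hB2 : ∀ n ∈ Finset.range (N+1),
      ∑ s ∈ (ceK P γ πseq s₀ β n).filter
          (fun s => Nat.findGreatest (fun k => s ∈ ceK P γ πseq s₀ β k) N = n),
        ceD P γ πseq s₀ (n+1) s
      ≤ (1/2) * (∑ s, ceD P γ πseq s₀ n s * w n s)
        + (1/2) * ∑ s ∈ (ceK P γ πseq s₀ β n).filter
            (fun s => Nat.findGreatest (fun k => s ∈ ceK P γ πseq s₀ β k) N = n),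
          (⨆ π' : {π' : S → A → ℝ // IsPolicy π'}, dvisit P γ π'.1 (dirac s₀) s) := by
    intro n hn
    have h1 : ∑ s ∈ (ceK P γ πseq s₀ β n).filter
          (fun s => Nat.findGreatest (fun k => s ∈ ceK P γ πseq s₀ β k) N = n),
        ceD P γ πseq s₀ (n+1) s
        = (1/2) * (∑ s ∈ (ceK P γ πseq s₀ β n).filter
            (fun s => Nat.findGreatest (fun k => s ∈ ceK P γ πseq s₀ β k) N = n),
            dvisit P γ (πseq (n+1)) (ceD P γ πseq s₀ n) s)
          + (1/2) * (∑ s ∈ (ceK P γ πseq s₀ β n).filter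
            (fun s => Nat.findGreatest (fun k => s ∈ ceK P γ πseq s₀ β k) N = n),
            dvisit P γ (πseq (n+1)) (dirac s₀) s) := by
      rw [Finset.mul_sum, Finset.mul_sum, ← Finset.sum_add_distrib]
      exact Finset.sum_congr rfl fun s _ => hDsplit n s
    rw [h1]
    have h2 : ∑ s ∈ (ceK P γ πseq s₀ β n).filter
          (fun s => Nat.findGreatest (fun k => s ∈ ceK P γ πseq s₀ β k) N = n),
          dvisit P γ (πseq (n+1)) (ceD P γ πseq s₀ n) s
        ≤ ∑ s, ceD P γ πseq s₀ n s * w n s := by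
      calc ∑ s ∈ (ceK P γ πseq s₀ β n).filter
            (fun s => Nat.findGreatest (fun k => s ∈ ceK P γ πseq s₀ β k) N = n),
            dvisit P γ (πseq (n+1)) (ceD P γ πseq s₀ n) s
          ≤ ∑ s ∈ ceK P γ πseq s₀ β n, dvisit P γ (πseq (n+1)) (ceD P γ πseq s₀ n) s :=
            Finset.sum_le_sum_of_subset_of_nonneg (Finset.filter_subset _ _)
              (fun s _ _ => dvisit_nonneg hP hγ0 hγ1 (hπseq (n+1)) (hD n) s)
        _ = value P γ (πseq (n+1)) (ceR P γ πseq s₀ β n) (ceD P γ πseq s₀ n) :=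
            (hval n (πseq (n+1)) (hπseq (n+1)) _ (hD n)).symm
        _ ≤ ∑ s, ceD P γ πseq s₀ n s * w n s := by
            rw [hceR n]
            exact value_le_fixed hP hγ0 hγ1 (hπseq (n+1)) (hD n) (hr0 n) (hr1 n) (hw n)
    have h3 : ∑ s ∈ (ceK P γ πseq s₀ β n).filter
          (fun s => Nat.findGreatest (fun k => s ∈ ceK P γ πseq s₀ β k) N = n),
          dvisit P γ (πseq (n+1)) (dirac s₀) s
        ≤ ∑ s ∈ (ceK P γ πseq s₀ β n).filter
          (fun s => Nat.findGreatest (fun k => s ∈ ceK P γ πseq s₀ β k) N = n),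
          (⨆ π' : {π' : S → A → ℝ // IsPolicy π'}, dvisit P γ π'.1 (dirac s₀) s) :=
      Finset.sum_le_sum fun s _ => hgle (πseq (n+1)) (hπseq (n+1)) s
    linarith
  -- B2 g-part total
  have hTsum : ∑ n ∈ Finset.range (N+1), ∑ s ∈ (ceK P γ πseq s₀ β n).filter
        (fun s => Nat.findGreatest (fun k => s ∈ ceK P γ πseq s₀ β k) N = n),
        (⨆ π' : {π' : S → A → ℝ // IsPolicy π'}, dvisit P γ π'.1 (dirac s₀) s)
      ≤ ∑ s, ⨆ π' : {π' : S → A → ℝ // IsPolicy π'}, dvisit P γ π'.1 (dirac s₀) s := by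
    rw [sum_swap_finsets]
    refine Finset.sum_le_sum fun s _ => ?_
    have hsub : (Finset.range (N+1)).filter
        (fun n => s ∈ (ceK P γ πseq s₀ β n).filter
          (fun s' => Nat.findGreatest (fun k => s' ∈ ceK P γ πseq s₀ β k) N = n))
        ⊆ {Nat.findGreatest (fun k => s ∈ ceK P γ πseq s₀ β k) N} := by
      intro n hn
      rw [Finset.mem_singleton]
      rcases Finset.mem_filter.mp hn with ⟨_, hmem⟩
      exact ((Finset.mem_filter.mp hmem).2).symm
    calc ∑ n ∈ (Finset.range (N+1)).filter
          (fun n => s ∈ (ceK P γ πseq s₀ β n).filter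
            (fun s' => Nat.findGreatest (fun k => s' ∈ ceK P γ πseq s₀ β k) N = n)),
          (⨆ π' : {π' : S → A → ℝ // IsPolicy π'}, dvisit P γ π'.1 (dirac s₀) s)
        ≤ ∑ n ∈ ({Nat.findGreatest (fun k => s ∈ ceK P γ πseq s₀ β k) N} : Finset ℕ),
          (⨆ π' : {π' : S → A → ℝ // IsPolicy π'}, dvisit P γ π'.1 (dirac s₀) s) :=
          Finset.sum_le_sum_of_subset_of_nonneg hsub (fun _ _ _ => hg0 s)
      _ = ⨆ π' : {π' : S → A → ℝ // IsPolicy π'}, dvisit P γ π'.1 (dirac s₀) s :=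
          Finset.sum_singleton _ _
  -- B1
  have hβt0 : ∀ s, 0 ≤ ceBetaTilde P γ πseq s₀ β N s := by
    intro s
    unfold ceBetaTilde
    split
    · exact hβ _
    · exact le_refl 0
  have hB1 : ∑ n ∈ Finset.range (N+1), ∑ s ∈ (ceK P γ πseq s₀ β n).filter
        (fun s => ¬ Nat.findGreatest (fun k => s ∈ ceK P γ πseq s₀ β k) N = n),
        ceD P γ πseq s₀ (n+1) s
      ≤ ∑ s, ceBetaTilde P γ πseq s₀ β N s := by
    rw [sum_swap_finsets]
    refine Finset.sum_le_sum fun s _ => ?_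
    by_cases hne : ((Finset.range (N+1)).filter
        (fun n => s ∈ (ceK P γ πseq s₀ β n).filter
          (fun s' => ¬ Nat.findGreatest (fun k => s' ∈ ceK P γ πseq s₀ β k) N = n))).Nonempty
    · obtain ⟨n₀, hn₀⟩ := hne
      have hmem : ∀ n ∈ (Finset.range (N+1)).filter
          (fun n => s ∈ (ceK P γ πseq s₀ β n).filter
            (fun s' => ¬ Nat.findGreatest (fun k => s' ∈ ceK P γ πseq s₀ β k) N = n)),
          n ≤ N ∧ s ∈ ceK P γ πseq s₀ β n
            ∧ ¬ Nat.findGreatest (fun k => s ∈ ceK P γ πseq s₀ β k) N = n := by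
        intro n hn
        rcases Finset.mem_filter.mp hn with ⟨hr, hm⟩
        rcases Finset.mem_filter.mp hm with ⟨hK, hne'⟩
        exact ⟨Nat.lt_succ_iff.mp (Finset.mem_range.mp hr), hK, hne'⟩
      have hU : ∃ k ≤ N, s ∈ ceK P γ πseq s₀ β k :=
        ⟨n₀, (hmem n₀ hn₀).1, (hmem n₀ hn₀).2.1⟩
      have hKnt : s ∈ ceK P γ πseq s₀ β
          (Nat.findGreatest (fun k => s ∈ ceK P γ πseq s₀ β k) N) :=
        Nat.findGreatest_spec (P := fun k => s ∈ ceK P γ πseq s₀ β k)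
          (hmem n₀ hn₀).1 (hmem n₀ hn₀).2.1
      have himg : ∑ n ∈ (Finset.range (N+1)).filter
            (fun n => s ∈ (ceK P γ πseq s₀ β n).filter
              (fun s' => ¬ Nat.findGreatest (fun k => s' ∈ ceK P γ πseq s₀ β k) N = n)),
            ceD P γ πseq s₀ (n+1) s
          = ∑ m ∈ ((Finset.range (N+1)).filter
            (fun n => s ∈ (ceK P γ πseq s₀ β n).filter
              (fun s' => ¬ Nat.findGreatest (fun k => s' ∈ ceK P γ πseq s₀ β k) N = n))).image
              (· + 1),
            ceD P γ πseq s₀ m s := by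
        rw [Finset.sum_image (fun a _ b _ h => by omega)]
      have hsub : ((Finset.range (N+1)).filter
            (fun n => s ∈ (ceK P γ πseq s₀ β n).filter
              (fun s' => ¬ Nat.findGreatest (fun k => s' ∈ ceK P γ πseq s₀ β k) N = n))).image
              (· + 1)
          ⊆ Finset.range (Nat.findGreatest (fun k => s ∈ ceK P γ πseq s₀ β k) N + 1) := by
        intro m hm
        obtain ⟨n, hn, rfl⟩ := Finset.mem_image.mp hm
        have h1 := hmem n hn
        have h2 : n ≤ Nat.findGreatest (fun k => s ∈ ceK P γ πseq s₀ β k) N :=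
          Nat.le_findGreatest h1.1 h1.2.1
        have h3 : ¬ Nat.findGreatest (fun k => s ∈ ceK P γ πseq s₀ β k) N = n := h1.2.2
        rw [Finset.mem_range]
        omega
      have hKcond : ∑ i ∈ Finset.range
            (Nat.findGreatest (fun k => s ∈ ceK P γ πseq s₀ β k) N + 1),
            ceD P γ πseq s₀ i s
          ≤ β (Nat.findGreatest (fun k => s ∈ ceK P γ πseq s₀ β k) N) := by
        have := Finset.mem_filter.mp hKnt
        exact this.2
      calc ∑ n ∈ (Finset.range (N+1)).filter
            (fun n => s ∈ (ceK P γ πseq s₀ β n).filter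
              (fun s' => ¬ Nat.findGreatest (fun k => s' ∈ ceK P γ πseq s₀ β k) N = n)),
            ceD P γ πseq s₀ (n+1) s
          ≤ ∑ m ∈ Finset.range (Nat.findGreatest (fun k => s ∈ ceK P γ πseq s₀ β k) N + 1),
            ceD P γ πseq s₀ m s := by
            rw [himg]
            exact Finset.sum_le_sum_of_subset_of_nonneg hsub (fun i _ _ => (hD i).1 s)
        _ ≤ β (Nat.findGreatest (fun k => s ∈ ceK P γ πseq s₀ β k) N) := hKcond
        _ = ceBetaTilde P γ πseq s₀ β N s := by
            unfold ceBetaTilde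
            rw [if_pos hU]
    · rw [Finset.not_nonempty_iff_eq_empty.mp hne, Finset.sum_empty]
      exact hβt0 s
  -- combine
  have hsplit : ∀ n, ∑ s ∈ ceK P γ πseq s₀ β n, ceD P γ πseq s₀ (n+1) s
      = (∑ s ∈ (ceK P γ πseq s₀ β n).filter
          (fun s => Nat.findGreatest (fun k => s ∈ ceK P γ πseq s₀ β k) N = n),
          ceD P γ πseq s₀ (n+1) s)
        + ∑ s ∈ (ceK P γ πseq s₀ β n).filter
          (fun s => ¬ Nat.findGreatest (fun k => s ∈ ceK P γ πseq s₀ β k) N = n),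
          ceD P γ πseq s₀ (n+1) s :=
    fun n => (Finset.sum_filter_add_sum_filter_not _ _ _).symm
  have hAsum := Finset.sum_le_sum stepA
  have hB2sum := Finset.sum_le_sum hB2
  rw [Finset.sum_add_distrib, Finset.sum_add_distrib] at hAsum
  rw [Finset.sum_add_distrib] at hB2sum
  rw [← Finset.mul_sum, ← Finset.mul_sum] at hAsum hB2sum
  have hTotsplit : ∑ n ∈ Finset.range (N+1), ∑ s ∈ ceK P γ πseq s₀ β n,
        ceD P γ πseq s₀ (n+1) s
      = (∑ n ∈ Finset.range (N+1), ∑ s ∈ (ceK P γ πseq s₀ β n).filter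
          (fun s => Nat.findGreatest (fun k => s ∈ ceK P γ πseq s₀ β k) N = n),
          ceD P γ πseq s₀ (n+1) s)
        + ∑ n ∈ Finset.range (N+1), ∑ s ∈ (ceK P γ πseq s₀ β n).filter
          (fun s => ¬ Nat.findGreatest (fun k => s ∈ ceK P γ πseq s₀ β k) N = n),
          ceD P γ πseq s₀ (n+1) s := by
    rw [← Finset.sum_add_distrib]
    exact Finset.sum_congr rfl fun n _ => hsplit n
  have hgsum : 0 ≤ ∑ s, ⨆ π' : {π' : S → A → ℝ // IsPolicy π'},
      dvisit P γ π'.1 (dirac s₀) s := Finset.sum_nonneg fun s _ => hg0 s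
  linarith [hAsum, hB2sum, hTsum, hB1, hTotsplit, hgsum]
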